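/- Let m be a positive integer, let P, Q ∈ ℤ[X] be polynomials with deg P < deg Q, such that both the constant coefficient and the leading coefficient of Q are coprime to m, and let a : ℕ → ℤ be a sequence whose generating function satisfies Q(X) · Σ_{n≥0} a_n Xⁿ = P(X) as formal power series over ℤ. Then the sequence a_n modulo m is purely periodic: there exists T > 0 such that a_{n+T} ≡ a_n (mod m) for all n ≥ 0. -/

import Mathlib

open Polynomial

private lemma isUnit_cast_of_isCoprime {m : ℕ} {x : ℤ} (h : IsCoprime x (m : ℤ)) :
    IsUnit ((x : ZMod m)) := by
  obtain ⟨u, v, huv⟩ := h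
  apply IsUnit.of_mul_eq_one ((u : ZMod m))
  have := congrArg (Int.cast : ℤ → ZMod m) huv
  push_cast at this
  rw [show ((m : ZMod m)) = 0 from ZMod.natCast_self m] at this
  linear_combination this

private lemma ps_map_coe {R S : Type*} [CommSemiring R] [CommSemiring S] (f : R →+* S)
    (p : Polynomial R) :
    PowerSeries.map f (p : PowerSeries R) = ((p.map f : Polynomial S) : PowerSeries S) := by
  ext n
  simp [Polynomial.coeff_coe, Polynomial.coeff_map]

private lemma ps_map_mk {R S : Type*} [CommSemiring R] [CommSemiring S] (f : R →+* S)
    (a : ℕ → R) :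
    PowerSeries.map f (PowerSeries.mk a) = PowerSeries.mk (fun n => f (a n)) := by
  ext n
  simp

/-- If `deg P < deg Q`, the constant and leading coefficients of `Q` are coprime
to `m`, and `Q · ∑ aₙ Xⁿ = P` as formal power series, then the sequence `aₙ`
is purely periodic modulo `m`. -/
theorem purely_periodic_of_rational_generating_function
    (m : ℕ) (hm : 0 < m) (P Q : Polynomial ℤ)
    (hdeg : P.degree < Q.degree)
    (hc0 : IsCoprime (Q.coeff 0) (m : ℤ))
    (hlead : IsCoprime Q.leadingCoeff (m : ℤ))
    (a : ℕ → ℤ)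
    (hgen : (Q : PowerSeries ℤ) * PowerSeries.mk a = (P : PowerSeries ℤ)) :
    ∃ T : ℕ, 0 < T ∧ ∀ n : ℕ, a (n + T) ≡ a n [ZMOD (m : ℤ)] := by
  rcases eq_or_ne m 1 with rfl | hm1
  · exact ⟨1, one_pos, fun n => Int.modEq_one⟩
  haveI : NeZero m := ⟨hm.ne'⟩
  haveI : Fact (1 < m) := ⟨lt_of_le_of_ne hm (Ne.symm hm1)⟩
  set φ := Int.castRingHom (ZMod m) with hφ
  set b : ℕ → ZMod m := fun n => ((a n : ZMod m)) with hb
  -- units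
  have hlu : IsUnit (φ Q.leadingCoeff) := isUnit_cast_of_isCoprime hlead
  have hl0 : φ Q.leadingCoeff ≠ 0 := hlu.ne_zero
  set Qb : Polynomial (ZMod m) := Q.map φ with hQbdef
  set Pb : Polynomial (ZMod m) := P.map φ with hPbdef
  have hdQb : Qb.degree = Q.degree := degree_map_eq_of_leadingCoeff_ne_zero φ hl0
  have hQblead : Qb.leadingCoeff = φ Q.leadingCoeff :=
    leadingCoeff_map_of_leadingCoeff_ne_zero φ hl0
  have hluQb : IsUnit Qb.leadingCoeff := hQblead ▸ hlu
  obtain ⟨c, hc⟩ := hluQb.exists_left_inv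
  have hcne : c ≠ 0 := by
    intro h; rw [h, zero_mul] at hc; exact zero_ne_one hc
  set Q' : Polynomial (ZMod m) := C c * Qb with hQ'def
  have hlcmul : (C c).leadingCoeff * Qb.leadingCoeff ≠ 0 := by
    rw [leadingCoeff_C, hc]; exact one_ne_zero
  have hmonic : Q'.Monic := by
    unfold Q'
    unfold Monic
    rw [leadingCoeff_mul' hlcmul, leadingCoeff_C, hc]
  have hdQ' : Q'.degree = Q.degree := by
    unfold Q'
    rw [degree_mul' hlcmul, degree_C hcne, zero_add, hdQb]
  -- coprimality of X and Q'
  have hu0 : IsUnit (Q'.coeff 0) := by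
    have h1 : Q'.coeff 0 = c * Qb.coeff 0 := by unfold Q'; rw [coeff_C_mul]
    have h2 : Qb.coeff 0 = φ (Q.coeff 0) := by unfold Qb; rw [coeff_map]
    rw [h1, h2]
    exact (IsUnit.of_mul_eq_one (a := c) Qb.leadingCoeff hc).mul (isUnit_cast_of_isCoprime hc0)
  obtain ⟨e, he⟩ := hu0.exists_left_inv
  have hcop : IsCoprime (X : Polynomial (ZMod m)) Q' := by
    refine ⟨-(C e * Q'.divX), C e, ?_⟩
    have h1 : C e * C (Q'.coeff 0) = 1 := by rw [← C_mul, he, C_1]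
    linear_combination (-(C e)) * Polynomial.divX_mul_X_add Q' + h1
  -- pigeonhole
  set d : ℕ := Q'.natDegree with hddef
  have hQ'ne : Q' ≠ 0 := hmonic.ne_zero
  have hdd : Q'.degree = (d : WithBot ℕ) := degree_eq_natDegree hQ'ne
  obtain ⟨x, y, hxy, hfxy⟩ :=
    Finite.exists_ne_map_eq_of_infinite (fun n : ℕ => fun i : Fin d => ((X : Polynomial (ZMod m)) ^ n %ₘ Q').coeff i)
  wlog hlt : x < y generalizing x y
  · exact this y x hxy.symm hfxy.symm (by omega)
  have hmodeq : (X : Polynomial (ZMod m)) ^ x %ₘ Q' = (X : Polynomial (ZMod m)) ^ y %ₘ Q' := by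
    ext i
    by_cases hi : i < d
    · exact congrFun hfxy ⟨i, hi⟩
    · rw [coeff_eq_zero_of_degree_lt, coeff_eq_zero_of_degree_lt]
      all_goals
        refine lt_of_lt_of_le (degree_modByMonic_lt _ hmonic) ?_
        rw [hdd]
        exact_mod_cast Nat.cast_le.mpr (le_of_not_gt hi)
  have hdvd0 : Q' ∣ (X : Polynomial (ZMod m)) ^ y - X ^ x := by
    rw [← modByMonic_eq_zero_iff_dvd hmonic, sub_modByMonic, hmodeq, sub_self]
  set T : ℕ := y - x with hTdef
  have hT : 0 < T := by omega
  have hfac : (X : Polynomial (ZMod m)) ^ y - X ^ x = X ^ x * (X ^ T - 1) := by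
    rw [mul_sub, mul_one, ← pow_add]
    congr 2
    omega
  have hdvd : Q' ∣ (X : Polynomial (ZMod m)) ^ T - 1 := by
    refine (hcop.symm.pow_right (n := x)).dvd_of_dvd_mul_left ?_
    rw [← hfac]; exact hdvd0
  set R₁ : Polynomial (ZMod m) := ((X : Polynomial (ZMod m)) ^ T - 1) /ₘ Q' with hR₁def
  have hfact : Q' * R₁ = (X : Polynomial (ZMod m)) ^ T - 1 := by
    have := modByMonic_add_div ((X : Polynomial (ZMod m)) ^ T - 1) Q'
    rwa [(modByMonic_eq_zero_iff_dvd hmonic).mpr hdvd, zero_add] at this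
  have hdXT : ((X : Polynomial (ZMod m)) ^ T - 1).degree = (T : WithBot ℕ) := by
    simpa using degree_X_pow_sub_C hT (1 : ZMod m)
  have hR₁ne : R₁ ≠ 0 := by
    intro h
    rw [h, mul_zero] at hfact
    rw [← hfact] at hdXT
    simp at hdXT
  -- map the generating function identity
  have hgenb : (Q' : PowerSeries (ZMod m)) * PowerSeries.mk b = ((C c * Pb : Polynomial (ZMod m)) : PowerSeries (ZMod m)) := by
    have h0 := congrArg (PowerSeries.map φ) hgen
    rw [map_mul, ps_map_coe, ps_map_coe, ps_map_mk] at h0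
    have : (Qb : PowerSeries (ZMod m)) * PowerSeries.mk b = (Pb : PowerSeries (ZMod m)) := h0
    unfold Q'
    rw [Polynomial.coe_mul, Polynomial.coe_mul, mul_assoc, this]
  set Cp : Polynomial (ZMod m) := R₁ * (C c * Pb) with hCpdef
  have key : (((X : Polynomial (ZMod m)) ^ T - 1 : Polynomial (ZMod m)) : PowerSeries (ZMod m)) * PowerSeries.mk b
      = (Cp : PowerSeries (ZMod m)) := by
    rw [← hfact]
    calc ((Q' * R₁ : Polynomial (ZMod m)) : PowerSeries (ZMod m)) * PowerSeries.mk b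
        = (R₁ : PowerSeries (ZMod m)) * ((Q' : PowerSeries (ZMod m)) * PowerSeries.mk b) := by
          rw [Polynomial.coe_mul]; ring
      _ = (R₁ : PowerSeries (ZMod m)) * ((C c * Pb : Polynomial (ZMod m)) : PowerSeries (ZMod m)) := by
          rw [hgenb]
      _ = (Cp : PowerSeries (ZMod m)) := by rw [hCpdef]; simp [Polynomial.coe_mul]
  -- degree bound
  have hCdeg : ∀ n : ℕ, T ≤ n → Cp.coeff n = 0 := by
    intro n hn
    apply coeff_eq_zero_of_degree_lt
    have h1 : Cp.degree ≤ R₁.degree + (C c * Pb).degree := degree_mul_le _ _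
    have h2 : (C c * Pb).degree < Q'.degree := by
      refine lt_of_le_of_lt (degree_mul_le _ _) ?_
      refine lt_of_le_of_lt (add_le_add degree_C_le (degree_map_le (f := φ) (p := P))) ?_
      rw [zero_add, hdQ']
      exact hdeg
    have h3 : R₁.degree + (C c * Pb).degree < R₁.degree + Q'.degree :=
      WithBot.add_lt_add_left (degree_eq_natDegree hR₁ne ▸ WithBot.coe_ne_bot) h2
    have h4 : R₁.degree + Q'.degree = (T : WithBot ℕ) := by
      rw [← hmonic.degree_mul (p := R₁), mul_comm, hfact, hdXT]
    calc Cp.degree ≤ R₁.degree + (C c * Pb).degree := h1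
      _ < R₁.degree + Q'.degree := h3
      _ = (T : WithBot ℕ) := h4
      _ ≤ (n : WithBot ℕ) := by exact_mod_cast hn
  -- extract coefficients
  have hbn : ∀ n : ℕ, b (n + T) = b n := by
    intro n
    have h0 := congrArg (PowerSeries.coeff (R := ZMod m) (n + T)) key
    rw [Polynomial.coe_sub, Polynomial.coe_pow, Polynomial.coe_one, Polynomial.coe_X,
      sub_mul, one_mul, map_sub, PowerSeries.coeff_X_pow_mul, PowerSeries.coeff_mk,
      PowerSeries.coeff_mk, Polynomial.coeff_coe, hCdeg (n + T) (by omega)] at h0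
    exact (sub_eq_zero.mp h0).symm
  exact ⟨T, hT, fun n => (ZMod.intCast_eq_intCast_iff _ _ _).mp (hbn n)⟩
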